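/- Let (V, ⟨·,·⟩) be a non-degenerate quadratic space over a field k with char(k) ≠ 2 and let σ ∈ O(V) have minimal polynomial p̃·p̃*, where p̃ is a monic irreducible separable polynomial over k with p̃ ≠ p̃*. Let E := k[x]/(p̃·p̃*), regard V as an E-module via σ, let ι be the involution of E over k with ι(x) = x^{-1}, and let Tr_{E/k} be the trace of the finite étale k-algebra E. Then V admits one and only one hermitian inner product h over E with respect to ι satisfying ⟨u, v⟩ = Tr_{E/k}(h(u, v)) for all u, v ∈ V; moreover this h is non-degenerate. -/

import Mathlib

open Polynomial

/-- `p*(x) = p(0)⁻¹ x^(deg p) p(1/x)`. -/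
noncomputable def pstar {k : Type*} [Field k] (p : k[X]) : k[X] :=
  C (p.eval 0)⁻¹ * p.reverse


namespace Stmt5Aux

variable {k : Type*} [Field k]




lemma reverse_reverse' {p : k[X]} (h0 : p.coeff 0 ≠ 0) : p.reverse.reverse = p := by
  have hnt : p.natTrailingDegree = 0 := natTrailingDegree_eq_zero.mpr (Or.inr h0)
  have hnd : p.reverse.natDegree = p.natDegree := by
    rw [reverse_natDegree, hnt, Nat.sub_zero]
  ext i
  rw [coeff_reverse, coeff_reverse, hnd, revAt_invol]

lemma reverse_C_mul {a : k} (ha : a ≠ 0) (q : k[X]) : (C a * q).reverse = C a * q.reverse := by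
  rw [Polynomial.reverse, Polynomial.reverse, natDegree_C_mul ha, reflect_C_mul]

lemma pstar_monic {p : k[X]} (hm : p.Monic) (h0 : p.eval 0 ≠ 0) : (pstar p).Monic := by
  have h0' : p.coeff 0 ≠ 0 := by rwa [coeff_zero_eq_eval_zero]
  have hnt : p.natTrailingDegree = 0 := natTrailingDegree_eq_zero.mpr (Or.inr h0')
  have htc : p.trailingCoeff = p.coeff 0 := by rw [trailingCoeff, hnt]
  have : (pstar p).leadingCoeff = 1 := by
    rw [pstar, leadingCoeff_mul, leadingCoeff_C, reverse_leadingCoeff, htc,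
      coeff_zero_eq_eval_zero, inv_mul_cancel₀ h0]
  exact this

lemma pstar_eval_zero {p : k[X]} (hm : p.Monic) (h0 : p.eval 0 ≠ 0) :
    (pstar p).eval 0 = (p.eval 0)⁻¹ := by
  rw [pstar, eval_mul, eval_C, ← coeff_zero_eq_eval_zero (p.reverse), coeff_zero_reverse,
    hm.leadingCoeff, mul_one]

lemma pstar_pstar {p : k[X]} (hm : p.Monic) (h0 : p.eval 0 ≠ 0) : pstar (pstar p) = p := by
  have h0' : p.coeff 0 ≠ 0 := by rwa [coeff_zero_eq_eval_zero]
  rw [pstar, pstar_eval_zero hm h0, inv_inv, pstar, reverse_C_mul (inv_ne_zero h0),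
    ← mul_assoc, ← C_mul, mul_inv_cancel₀ h0, C_1, one_mul, reverse_reverse' h0']

lemma pstar_natDegree {p : k[X]} (h0 : p.eval 0 ≠ 0) :
    (pstar p).natDegree = p.natDegree := by
  have h0' : p.coeff 0 ≠ 0 := by rwa [coeff_zero_eq_eval_zero]
  have hnt : p.natTrailingDegree = 0 := natTrailingDegree_eq_zero.mpr (Or.inr h0')
  rw [pstar, natDegree_C_mul (inv_ne_zero h0), reverse_natDegree, hnt, Nat.sub_zero]





lemma pstar_mul {a b : k[X]} :
    pstar (a * b) = pstar a * pstar b := by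
  rw [pstar, pstar, pstar, eval_mul, mul_inv, C_mul, reverse_mul_of_domain]
  ring


lemma pstar_irreducible {p : k[X]} (hm : p.Monic) (hirr : Irreducible p) (h0 : p.eval 0 ≠ 0) :
    Irreducible (pstar p) := by
  have hn : p.natDegree ≠ 0 :=
    (natDegree_pos_iff_degree_pos.mpr (degree_pos_of_irreducible hirr)).ne'
  constructor
  · intro hu
    exact hn (by rw [← pstar_natDegree h0]; exact natDegree_eq_zero_of_isUnit hu)
  · intro a b hab
    have heval : a.eval 0 * b.eval 0 ≠ 0 := by
      rw [← eval_mul, ← hab, pstar_eval_zero hm h0]; exact inv_ne_zero h0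
    have ha0 : a.eval 0 ≠ 0 := left_ne_zero_of_mul heval
    have hb0 : b.eval 0 ≠ 0 := right_ne_zero_of_mul heval
    have hp : p = pstar a * pstar b := by
      rw [← pstar_mul, ← hab, pstar_pstar hm h0]
    have key : ∀ c : k[X], c.eval 0 ≠ 0 → IsUnit (pstar c) → IsUnit c := by
      intro c hc0 hcu
      have : c.natDegree = 0 := by
        rw [← pstar_natDegree hc0]; exact natDegree_eq_zero_of_isUnit hcu
      rw [eq_C_of_natDegree_eq_zero this]
      refine isUnit_C.mpr (isUnit_iff_ne_zero.mpr ?_)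
      rwa [coeff_zero_eq_eval_zero]
    rcases hirr.isUnit_or_isUnit hp with h | h
    · exact Or.inl (key a ha0 h)
    · exact Or.inr (key b hb0 h)

lemma pstar_separable {p : k[X]} (hm : p.Monic) (hirr : Irreducible p) (hsep : p.Separable)
    (h0 : p.eval 0 ≠ 0) : (pstar p).Separable := by
  rw [separable_iff_derivative_ne_zero (pstar_irreducible hm hirr h0)]
  intro hder
  have h0' : p.coeff 0 ≠ 0 := by rwa [coeff_zero_eq_eval_zero]
  have hn : p.natDegree ≠ 0 :=
    (natDegree_pos_iff_degree_pos.mpr (degree_pos_of_irreducible hirr)).ne'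
  set n := p.natDegree with hndef
  have hrev : derivative p.reverse = 0 := by
    have : derivative (pstar p) = C (p.eval 0)⁻¹ * derivative p.reverse := by
      rw [pstar, derivative_C_mul]
    rw [this] at hder
    rcases mul_eq_zero.mp hder with h | h
    · exact absurd h (by simp [h0])
    · exact h
  -- coefficient conditions
  have hcond : ∀ i : ℕ, p.reverse.coeff (i + 1) * ((i : k) + 1) = 0 := by
    intro i
    have := congrArg (fun q => coeff q i) hrev
    simpa [coeff_derivative] using this
  have hrevco : ∀ i : ℕ, i ≤ n → p.reverse.coeff i = p.coeff (n - i) := by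
    intro i hi
    rw [coeff_reverse, revAt_le hi]
  have hnk : (n : k) = 0 := by
    have := hcond (n - 1)
    rw [Nat.sub_add_cancel (Nat.one_le_iff_ne_zero.mpr hn)] at this
    rw [hrevco n le_rfl, Nat.sub_self] at this
    have h2 : ((n - 1 : ℕ) : k) + 1 = (n : k) := by
      have : ((n - 1 : ℕ) + 1 : ℕ) = n := Nat.sub_add_cancel (Nat.one_le_iff_ne_zero.mpr hn)
      rw [← this]; push_cast; ring
    rw [h2] at this
    rcases mul_eq_zero.mp this with h | h
    · exact absurd h h0'
    · exact h
  have hderp : derivative p = 0 := by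
    ext i
    rw [coeff_derivative, coeff_zero]
    rcases lt_or_ge n (i + 1) with hlt | hle
    · rw [coeff_eq_zero_of_natDegree_lt hlt, zero_mul]
    · rcases eq_or_lt_of_le hle with heq | hlt
      · rw [heq]
        have : ((i : k) + 1) = (n : k) := by rw [← heq]; push_cast; ring
        rw [this, hnk, mul_zero]
      · -- i + 1 < n, use condition at index m with m + 1 = n - (i+1)
        have h1 : 1 ≤ n - (i + 1) := by omega
        have := hcond (n - (i + 1) - 1)
        have hm1 : (n - (i + 1) - 1) + 1 = n - (i + 1) := by omega
        rw [hm1, hrevco _ (by omega)] at this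
        have hsub : n - (n - (i + 1)) = i + 1 := by omega
        rw [hsub] at this
        have hcast : ((n - (i + 1) - 1 : ℕ) : k) + 1 = ((n - (i + 1) : ℕ) : k) := by
          rw [← hm1]; push_cast; ring
        rw [hcast] at this
        have hcast2 : ((n - (i + 1) : ℕ) : k) = -(((i : k)) + 1) := by
          have : ((n - (i + 1) : ℕ) : k) = (n : k) - ((i + 1 : ℕ) : k) := by
            rw [Nat.cast_sub (by omega)]
          rw [this, hnk]; push_cast; ring
        rw [hcast2, mul_neg, neg_eq_zero] at this
        exact this
  have : IsUnit p := by
    have := hsep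
    rw [Polynomial.Separable, hderp] at this
    exact isCoprime_zero_right.mp this
  exact hirr.not_isUnit this




theorem isSeparable_adjoinRoot (p : k[X]) (hm : p.Monic) [hF : Fact (Irreducible p)]
    (hs : p.Separable) : Algebra.IsSeparable k (AdjoinRoot p) := by
  have hne : p ≠ 0 := hm.ne_zero
  have hint : IsIntegral k (AdjoinRoot.root p) := AdjoinRoot.isIntegral_root hne
  have hminp : minpoly k (AdjoinRoot.root p) = p := by
    rw [AdjoinRoot.minpoly_root hne, hm.leadingCoeff, inv_one, map_one, mul_one]
  have hsx : IsSeparable k (AdjoinRoot.root p) := by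
    rw [IsSeparable, hminp]; exact hs
  have htop : IntermediateField.adjoin k {AdjoinRoot.root p} = ⊤ := by
    apply IntermediateField.toSubalgebra_injective
    rw [IntermediateField.adjoin_simple_toSubalgebra_of_isAlgebraic hint.isAlgebraic,
      AdjoinRoot.adjoinRoot_eq_top, IntermediateField.top_toSubalgebra]
  haveI : Algebra.IsSeparable k (IntermediateField.adjoin k {AdjoinRoot.root p}) :=
    (IntermediateField.isSeparable_adjoin_simple_iff_isSeparable k _).mpr hsx
  exact ⟨fun x => IntermediateField.isSeparable_of_mem_isSeparable k _
    (htop ▸ IntermediateField.mem_top)⟩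

theorem traceForm_nondeg_prod (A B : Type*) [Field A] [Field B] [Algebra k A] [Algebra k B]
    [FiniteDimensional k A] [FiniteDimensional k B]
    [Algebra.IsSeparable k A] [Algebra.IsSeparable k B] :
    (Algebra.traceForm k (A × B)).Nondegenerate := by
  suffices hsl : LinearMap.SeparatingLeft (Algebra.traceForm k (A × B)) from
    ⟨hsl, fun y hy => hsl y fun x => by
      rw [Algebra.traceForm_apply, mul_comm, ← Algebra.traceForm_apply]; exact hy x⟩
  intro x hx
  have hA := traceForm_nondegenerate k A
  have hB := traceForm_nondegenerate k B
  have h1 : x.1 = 0 := by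
    apply hA.1
    intro a
    have := hx (a, 0)
    simpa [Algebra.traceForm_apply, Prod.mul_def] using this
  have h2 : x.2 = 0 := by
    apply hB.1
    intro b
    have := hx (0, b)
    simpa [Algebra.traceForm_apply, Prod.mul_def] using this
  exact Prod.ext h1 h2






noncomputable def crtEquiv (p q : k[X]) (hco : IsCoprime p q) :
    AdjoinRoot (p * q) ≃ₐ[k] (AdjoinRoot p) × (AdjoinRoot q) := by
  have hspan : Ideal.span {p * q} = Ideal.span {p} * Ideal.span {q} :=
    (Ideal.span_singleton_mul_span_singleton p q).symm
  have hcoI : IsCoprime (Ideal.span {p}) (Ideal.span {q}) :=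
    (Ideal.isCoprime_span_singleton_iff p q).mpr hco
  refine AlgEquiv.trans (Ideal.quotientEquivAlgOfEq k hspan) ?_
  refine AlgEquiv.ofRingEquiv (f := Ideal.quotientMulEquivQuotientProd _ _ hcoI) ?_
  intro a
  rfl

theorem traceForm_nondeg_adjoinRoot_mul (p q : k[X]) (hpm : p.Monic) (hqm : q.Monic)
    (hpi : Irreducible p) (hqi : Irreducible q) (hps : p.Separable) (hqs : q.Separable)
    (hco : IsCoprime p q) : (Algebra.traceForm k (AdjoinRoot (p * q))).Nondegenerate := by
  haveI := Fact.mk hpi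
  haveI := Fact.mk hqi
  haveI : FiniteDimensional k (AdjoinRoot p) := (AdjoinRoot.powerBasis hpm.ne_zero).finite
  haveI : FiniteDimensional k (AdjoinRoot q) := (AdjoinRoot.powerBasis hqm.ne_zero).finite
  haveI := isSeparable_adjoinRoot p hpm hps
  haveI := isSeparable_adjoinRoot q hqm hqs
  let e := crtEquiv p q hco
  have hprod := traceForm_nondeg_prod (k := k) (AdjoinRoot p) (AdjoinRoot q)
  suffices hsl : LinearMap.SeparatingLeft (Algebra.traceForm k (AdjoinRoot (p * q))) from
    ⟨hsl, fun y hy => hsl y fun x => by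
      rw [Algebra.traceForm_apply, mul_comm y x, ← Algebra.traceForm_apply]; exact hy x⟩
  intro x hx
  have hex : e x = 0 := by
    apply hprod.1
    intro y
    have : x * e.symm y = e.symm (e x * y) := by
      rw [map_mul, e.symm_apply_apply]
    have h2 := hx (e.symm y)
    rw [Algebra.traceForm_apply] at h2 ⊢
    rw [← Algebra.trace_eq_of_algEquiv e.symm (e x * y), map_mul, e.symm_apply_apply]
    exact h2
  have := congrArg e.symm hex
  rwa [e.symm_apply_apply, map_zero] at this


end Stmt5Aux


set_option maxHeartbeats 2000000 in
open Stmt5Aux in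
/-- if the minimal polynomial of the isometry `σ` is `p̃ p̃*` with `p̃` monic
irreducible separable and `p̃ ≠ p̃*`, then, regarding `V` as a module over
`E = k[x]/(p̃ p̃*)` via `σ`, there is one and only one hermitian inner product `h` on `V`
over `E` (w.r.t. the involution `ι` with `ι(x) = x⁻¹`) with
`⟨u,v⟩ = Tr_{E/k} (h u v)` for all `u v`; moreover this `h` is non-degenerate. -/
theorem stmt_5 {k V : Type*} [Field k] [AddCommGroup V] [Module k V] [FiniteDimensional k V]
    (hchar : (2 : k) ≠ 0)
    (B : LinearMap.BilinForm k V) (hsymm : ∀ u v, B u v = B v u)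
    (hBnd : ∀ u, (∀ v, B u v = 0) → u = 0)
    (σ : V ≃ₗ[k] V) (hσ : ∀ u v, B (σ u) (σ v) = B u v)
    (pt : k[X]) (hmonic : pt.Monic) (hirr : Irreducible pt) (hsep : pt.Separable)
    (hps : pstar pt ≠ pt)
    (hmin : minpoly k (σ.toLinearMap : Module.End k V) = pt * pstar pt)
    (ι : AdjoinRoot (pt * pstar pt) ≃ₐ[k] AdjoinRoot (pt * pstar pt))
    (hι : ∀ a, ι (ι a) = a)
    (hιx : ι (AdjoinRoot.root (pt * pstar pt)) * AdjoinRoot.root (pt * pstar pt) = 1) :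
    (∃! h : V → V → AdjoinRoot (pt * pstar pt),
        (∀ u₁ u₂ v, h (u₁ + u₂) v = h u₁ v + h u₂ v) ∧
        (∀ (g : k[X]) (u v : V),
          h (aeval σ.toLinearMap g u) v = AdjoinRoot.mk (pt * pstar pt) g * h u v) ∧
        (∀ u v, h v u = ι (h u v)) ∧
        (∀ u v, B u v = Algebra.trace k (AdjoinRoot (pt * pstar pt)) (h u v))) ∧
    (∀ h : V → V → AdjoinRoot (pt * pstar pt),
        ((∀ u₁ u₂ v, h (u₁ + u₂) v = h u₁ v + h u₂ v) ∧
        (∀ (g : k[X]) (u v : V),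
          h (aeval σ.toLinearMap g u) v = AdjoinRoot.mk (pt * pstar pt) g * h u v) ∧
        (∀ u v, h v u = ι (h u v)) ∧
        (∀ u v, B u v = Algebra.trace k (AdjoinRoot (pt * pstar pt)) (h u v))) →
        ∀ u, (∀ v, h u v = 0) → u = 0) := by
  classical
  have hint : IsIntegral k (σ.toLinearMap : Module.End k V) := IsIntegral.of_finite k _
  have hmz : minpoly k (σ.toLinearMap : Module.End k V) ≠ 0 := minpoly.ne_zero hint
  have hc : pt.eval 0 ≠ 0 := by
    intro h
    apply hmz
    rw [hmin, pstar, h, inv_zero, map_zero, zero_mul, mul_zero]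
  have hqm : (pstar pt).Monic := pstar_monic hmonic hc
  have hqi : Irreducible (pstar pt) := pstar_irreducible hmonic hirr hc
  have hqs : (pstar pt).Separable := pstar_separable hmonic hirr hsep hc
  have hco : IsCoprime pt (pstar pt) := by
    rw [hirr.coprime_iff_not_dvd]
    intro hdvd
    exact hps (eq_of_monic_of_associated hqm hmonic
      (hirr.associated_of_dvd hqi hdvd).symm)
  have hfm : (pt * pstar pt).Monic := hmonic.mul hqm
  have hT : (Algebra.traceForm k (AdjoinRoot (pt * pstar pt))).Nondegenerate :=
    traceForm_nondeg_adjoinRoot_mul pt (pstar pt) hmonic hqm hirr hqi hsep hqs hco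
  haveI : FiniteDimensional k (AdjoinRoot (pt * pstar pt)) := (AdjoinRoot.powerBasis hfm.ne_zero).finite
  have haev : aeval (σ.toLinearMap : Module.End k V) (pt * pstar pt) = 0 := by
    rw [← hmin]; exact minpoly.aeval k _
  let φ : (AdjoinRoot (pt * pstar pt)) →ₐ[k] Module.End k V := Ideal.Quotient.liftₐ (Ideal.span {(pt * pstar pt)})
    (aeval σ.toLinearMap) (by
      intro a ha
      rw [Ideal.mem_span_singleton] at ha
      obtain ⟨c, rfl⟩ := ha
      rw [map_mul, haev, zero_mul])
  have hφmk : ∀ g : k[X], φ (AdjoinRoot.mk (pt * pstar pt) g) = aeval σ.toLinearMap g := fun g => rfl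
  have hroot : φ (AdjoinRoot.root (pt * pstar pt)) = σ.toLinearMap := by
    have := hφmk X
    rwa [aeval_X] at this
  let Lf : V → V → Module.Dual k (AdjoinRoot (pt * pstar pt)) := fun u v =>
    { toFun := fun e => B (φ e u) v
      map_add' := fun e e' => by simp [map_add, LinearMap.add_apply]
      map_smul' := fun c e => by simp [map_smul, LinearMap.smul_apply] }
  let h : V → V → (AdjoinRoot (pt * pstar pt)) := fun u v => ((Algebra.traceForm k (AdjoinRoot (pt * pstar pt))).toDual hT).symm (Lf u v)
  have hkey : ∀ u v (e : (AdjoinRoot (pt * pstar pt))), Algebra.trace k (AdjoinRoot (pt * pstar pt)) (e * h u v) = B (φ e u) v := by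
    intro u v e
    have h2 : ((Algebra.traceForm k (AdjoinRoot (pt * pstar pt))).toDual hT) (h u v) e = Lf u v e := by
      rw [LinearEquiv.apply_symm_apply]
    rw [LinearMap.BilinForm.toDual_def, Algebra.traceForm_apply] at h2
    rw [mul_comm (h u v) e] at h2
    exact h2
  have hinj : ∀ a b : (AdjoinRoot (pt * pstar pt)),
      (∀ e : (AdjoinRoot (pt * pstar pt)), Algebra.trace k (AdjoinRoot (pt * pstar pt)) (e * a) = Algebra.trace k (AdjoinRoot (pt * pstar pt)) (e * b)) → a = b := by
    intro a b hab
    have hz : a - b = 0 := by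
      apply hT.1
      intro e
      rw [Algebra.traceForm_apply, sub_mul, map_sub, mul_comm a e, mul_comm b e, hab e, sub_self]
    exact sub_eq_zero.mp hz
  have hadd : ∀ u₁ u₂ v, h (u₁ + u₂) v = h u₁ v + h u₂ v := by
    intro u₁ u₂ v
    apply hinj; intro e
    simp only [hkey, mul_add, map_add, LinearMap.add_apply]
  have hmulp : ∀ (g : k[X]) (u v : V),
      h (aeval σ.toLinearMap g u) v = AdjoinRoot.mk (pt * pstar pt) g * h u v := by
    intro g u v
    apply hinj; intro e
    rw [hkey, ← mul_assoc, hkey, map_mul, Module.End.mul_apply, hφmk]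
  have hστ : ∀ w : V, σ (φ (ι (AdjoinRoot.root (pt * pstar pt))) w) = w := by
    intro w
    have h1 : σ.toLinearMap * φ (ι (AdjoinRoot.root (pt * pstar pt))) = 1 := by
      rw [← hroot, ← map_mul, mul_comm (AdjoinRoot.root (pt * pstar pt)) (ι (AdjoinRoot.root (pt * pstar pt))), hιx, map_one]
    calc σ (φ (ι (AdjoinRoot.root (pt * pstar pt))) w)
        = (σ.toLinearMap * φ (ι (AdjoinRoot.root (pt * pstar pt)))) w := rfl
      _ = w := by rw [h1]; rfl
  have hstep : ∀ (w z : V), B (φ (ι (AdjoinRoot.root (pt * pstar pt))) w) z = B w (σ.toLinearMap z) := by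
    intro w z
    have h1 := hσ (φ (ι (AdjoinRoot.root (pt * pstar pt))) w) z
    rw [hστ w] at h1
    exact h1.symm
  have hpow : ∀ (n : ℕ) (u v : V),
      B ((φ (ι (AdjoinRoot.root (pt * pstar pt))) ^ n) u) v = B u ((σ.toLinearMap ^ n) v) := by
    intro n
    induction n with
    | zero => intro u v; simp
    | succ n ih =>
      intro u v
      rw [pow_succ, pow_succ', Module.End.mul_apply, Module.End.mul_apply, ih, hstep]
  have hadj : ∀ (g : k[X]) (u v : V),
      B (φ (ι (AdjoinRoot.mk (pt * pstar pt) g)) u) v = B u (φ (AdjoinRoot.mk (pt * pstar pt) g) v) := by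
    intro g
    induction g using Polynomial.induction_on' with
    | add p q hp hq =>
      intro u v
      simp only [map_add, LinearMap.add_apply]
      rw [hp, hq]
    | monomial n a =>
      intro u v
      have hmk : AdjoinRoot.mk (pt * pstar pt) ((monomial n) a) = algebraMap k (AdjoinRoot (pt * pstar pt)) a * (AdjoinRoot.root (pt * pstar pt)) ^ n := by
        rw [← C_mul_X_pow_eq_monomial, map_mul, map_pow, AdjoinRoot.mk_X]
        rfl
      rw [hmk]
      simp only [map_mul, map_pow, AlgEquiv.commutes, AlgHom.commutes, hroot,
        Module.End.mul_apply, Module.algebraMap_end_apply, map_smul,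
        LinearMap.smul_apply, smul_eq_mul]
      rw [hpow]
  have hsymm2 : ∀ u v, h v u = ι (h u v) := by
    intro u v
    apply hinj; intro e
    rw [hkey]
    have h1 : e * ι (h u v) = ι (ι e * h u v) := by rw [map_mul, hι]
    rw [h1, Algebra.trace_eq_of_algEquiv ι, hkey]
    obtain ⟨g, rfl⟩ := AdjoinRoot.mk_surjective e
    rw [hadj g u v]
    exact hsymm _ _
  have htr : ∀ u v, B u v = Algebra.trace k (AdjoinRoot (pt * pstar pt)) (h u v) := by
    intro u v
    have h1 := hkey u v 1
    rw [one_mul, map_one, Module.End.one_apply] at h1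
    exact h1.symm
  constructor
  · refine ⟨h, ⟨hadd, hmulp, hsymm2, htr⟩, ?_⟩
    intro h' hp'
    obtain ⟨h1', h2', h3', h4'⟩ := hp'
    funext u v
    apply hinj
    intro e
    obtain ⟨g, rfl⟩ := AdjoinRoot.mk_surjective e
    rw [← h2' g u v, ← h4' _ v, hkey, hφmk]
  · intro h' hp' u hu
    obtain ⟨h1', h2', h3', h4'⟩ := hp'
    apply hBnd u
    intro v
    rw [h4' u v, hu v, map_zero]
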